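/- Let P* be a finite measure on 𝒪 = 𝒳 × 𝒜 × 𝒴 with 𝒴 ⊆ ℝ and ∫ y² dP*(x,a,y) < ∞. Let μ : 𝒳 × 𝒜 → ℝ be a version of the conditional expectation of the coordinate y given (x,a) under P*. Let 𝓕 be a convex set of measurable functions 𝒳 × 𝒜 → ℝ, each square-integrable with respect to P* (as functions of (x,a)), and let f_1 ∈ argmin_{f∈𝓕} R*(f), where R*(f) = ∫ (y − f(x,a))² dP*(x,a,y). Then for every f ∈ 𝓕: R*(f) − R*(f_1) ≥ ∫ (f(x,a) − f_1(x,a))² dP*(x,a,y). -/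

import Mathlib

open MeasureTheory

/-- Product of two square-integrable functions is integrable. -/
lemma integrable_mul_of_sq {Ω : Type*} [MeasurableSpace Ω] {ν : Measure Ω}
    {a b : Ω → ℝ} (ha : Integrable (fun o => a o ^ 2) ν)
    (hb : Integrable (fun o => b o ^ 2) ν)
    (hab : AEStronglyMeasurable (fun o => a o * b o) ν) :
    Integrable (fun o => a o * b o) ν := by
  refine Integrable.mono' ((ha.add hb).div_const 2) hab ?_
  filter_upwards with o
  have h : (|a o| - |b o|) ^ 2 ≥ 0 := sq_nonneg _
  have h2 : |a o| ^ 2 = a o ^ 2 := sq_abs _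
  have h3 : |b o| ^ 2 = b o ^ 2 := sq_abs _
  simp only [Pi.add_apply]
  rw [Real.norm_eq_abs, abs_mul]
  nlinarith [abs_nonneg (a o), abs_nonneg (b o)]

/-- **Excess squared-error risk dominates squared distance to the minimizer.**

If `P*` is a finite measure on `𝒳 × 𝒜 × 𝒴` (`𝒴 ⊆ ℝ`) with square-integrable outcome, `μ`
is a version of the conditional expectation of `y` given `(x,a)`, `𝓕` is a convex set of
square-integrable measurable functions and `f₁ ∈ argmin_{f∈𝓕} R*(f)` for the squared-error
risk `R*(f) = ∫ (y − f(x,a))² dP*`, then for every `f ∈ 𝓕`,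
`R*(f) − R*(f₁) ≥ ∫ (f − f₁)² dP*`. -/

theorem excess_risk_dominates_L2_distance
    (𝒳 𝒜 : Type) [m𝒳 : MeasurableSpace 𝒳] [m𝒜 : MeasurableSpace 𝒜]
    (Pstar : Measure (𝒳 × 𝒜 × ℝ)) [IsFiniteMeasure Pstar]
    -- square-integrable outcome
    (hy2 : Integrable (fun o : 𝒳 × 𝒜 × ℝ => o.2.2 ^ 2) Pstar)
    -- μ, a version of the conditional expectation of y given (x,a) under P*
    (μ : 𝒳 × 𝒜 → ℝ) (hμmeas : Measurable μ)
    (hμ2 : Integrable (fun o : 𝒳 × 𝒜 × ℝ => (μ (o.1, o.2.1)) ^ 2) Pstar)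
    (hμcond : ∀ h : 𝒳 × 𝒜 → ℝ, Measurable h → (∀ z, |h z| ≤ 1) →
      ∫ o : 𝒳 × 𝒜 × ℝ, o.2.2 * h (o.1, o.2.1) ∂Pstar
        = ∫ o : 𝒳 × 𝒜 × ℝ, μ (o.1, o.2.1) * h (o.1, o.2.1) ∂Pstar)
    -- the convex hypothesis class of square-integrable measurable functions
    (F : Set (𝒳 × 𝒜 → ℝ))
    (hFconv : Convex ℝ F)
    (hFmeas : ∀ f ∈ F, Measurable f)
    (hF2 : ∀ f ∈ F, Integrable (fun o : 𝒳 × 𝒜 × ℝ => (f (o.1, o.2.1)) ^ 2) Pstar)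
    -- the population risk minimizer f₁
    (f1 : 𝒳 × 𝒜 → ℝ) (hf1F : f1 ∈ F)
    (hf1min : ∀ f ∈ F,
      (∫ o : 𝒳 × 𝒜 × ℝ, (o.2.2 - f1 (o.1, o.2.1)) ^ 2 ∂Pstar)
        ≤ ∫ o : 𝒳 × 𝒜 × ℝ, (o.2.2 - f (o.1, o.2.1)) ^ 2 ∂Pstar) :
    ∀ f ∈ F,
      (∫ o : 𝒳 × 𝒜 × ℝ, (f (o.1, o.2.1) - f1 (o.1, o.2.1)) ^ 2 ∂Pstar)
        ≤ (∫ o : 𝒳 × 𝒜 × ℝ, (o.2.2 - f (o.1, o.2.1)) ^ 2 ∂Pstar)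
          - ∫ o : 𝒳 × 𝒜 × ℝ, (o.2.2 - f1 (o.1, o.2.1)) ^ 2 ∂Pstar := by
  intro f hf
  have hπmeas : Measurable (fun o : 𝒳 × 𝒜 × ℝ => (o.1, o.2.1)) :=
    measurable_fst.prodMk (measurable_fst.comp measurable_snd)
  -- E = y - f1, G = f - f1 (as functions of o)
  set E : 𝒳 × 𝒜 × ℝ → ℝ := fun o => o.2.2 - f1 (o.1, o.2.1) with hE
  set G : 𝒳 × 𝒜 × ℝ → ℝ := fun o => f (o.1, o.2.1) - f1 (o.1, o.2.1) with hG
  have hf1m : Measurable (fun o : 𝒳 × 𝒜 × ℝ => f1 (o.1, o.2.1)) :=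
    (hFmeas f1 hf1F).comp hπmeas
  have hfm : Measurable (fun o : 𝒳 × 𝒜 × ℝ => f (o.1, o.2.1)) :=
    (hFmeas f hf).comp hπmeas
  have hEmeas : Measurable E := (measurable_snd.comp measurable_snd).sub hf1m
  have hGmeas : Measurable G := hfm.sub hf1m
  -- square integrability of E and G
  have hf1sq := hF2 f1 hf1F
  have hfsq := hF2 f hf
  have hyf1 : Integrable (fun o : 𝒳 × 𝒜 × ℝ => o.2.2 * f1 (o.1, o.2.1)) Pstar :=
    integrable_mul_of_sq hy2 hf1sq
      (((measurable_snd.comp measurable_snd).mul hf1m).aestronglyMeasurable)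
  have hff1 : Integrable (fun o : 𝒳 × 𝒜 × ℝ => f (o.1, o.2.1) * f1 (o.1, o.2.1)) Pstar :=
    integrable_mul_of_sq hfsq hf1sq ((hfm.mul hf1m).aestronglyMeasurable)
  have hyf : Integrable (fun o : 𝒳 × 𝒜 × ℝ => o.2.2 * f (o.1, o.2.1)) Pstar :=
    integrable_mul_of_sq hy2 hfsq
      (((measurable_snd.comp measurable_snd).mul hfm).aestronglyMeasurable)
  have hE2 : Integrable (fun o => E o ^ 2) Pstar := by
    have : (fun o : 𝒳 × 𝒜 × ℝ => E o ^ 2)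
        = fun o => o.2.2 ^ 2 - 2 * (o.2.2 * f1 (o.1, o.2.1)) + f1 (o.1, o.2.1) ^ 2 := by
      funext o; simp only [hE]; ring
    rw [this]
    exact (hy2.sub (hyf1.const_mul 2)).add hf1sq
  have hG2 : Integrable (fun o => G o ^ 2) Pstar := by
    have : (fun o : 𝒳 × 𝒜 × ℝ => G o ^ 2)
        = fun o => f (o.1, o.2.1) ^ 2 - 2 * (f (o.1, o.2.1) * f1 (o.1, o.2.1))
            + f1 (o.1, o.2.1) ^ 2 := by
      funext o; simp only [hG]; ring
    rw [this]
    exact (hfsq.sub (hff1.const_mul 2)).add hf1sq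
  have hEG : Integrable (fun o => E o * G o) Pstar :=
    integrable_mul_of_sq hE2 hG2 ((hEmeas.mul hGmeas).aestronglyMeasurable)
  set A : ℝ := ∫ o, G o ^ 2 ∂Pstar with hA
  set B : ℝ := ∫ o, E o * G o ∂Pstar with hB
  -- key expansion
  have expand : ∀ t : ℝ,
      (∫ o, (E o - t * G o) ^ 2 ∂Pstar)
        = (∫ o, E o ^ 2 ∂Pstar) - 2 * t * B + t ^ 2 * A := by
    intro t
    have hfun : (fun o => (E o - t * G o) ^ 2)
        = fun o => (E o ^ 2 - 2 * t * (E o * G o)) + t ^ 2 * G o ^ 2 := by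
      funext o; ring
    have hint1 : Integrable (fun o => E o ^ 2 - 2 * t * (E o * G o)) Pstar :=
      hE2.sub (hEG.const_mul (2 * t))
    have hint2 : Integrable (fun o => t ^ 2 * G o ^ 2) Pstar := hG2.const_mul (t ^ 2)
    rw [hfun, integral_add hint1 hint2, integral_sub hE2 (hEG.const_mul (2 * t)),
      integral_const_mul, integral_const_mul]
  have hAnn : 0 ≤ A := integral_nonneg fun o => sq_nonneg _
  -- risk comparison along the segment
  have hrisk : ∀ t : ℝ, 0 < t → t ≤ 1 → 2 * B ≤ t * A := by
    intro t ht0 ht1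
    have hft : ((1 - t) • f1 + t • f) ∈ F :=
      hFconv hf1F hf (by linarith) (le_of_lt ht0) (by ring)
    have hmin := hf1min _ hft
    have heq1 : (fun o : 𝒳 × 𝒜 × ℝ => (o.2.2 - ((1 - t) • f1 + t • f) (o.1, o.2.1)) ^ 2)
        = fun o => (E o - t * G o) ^ 2 := by
      funext o
      simp only [hE, hG, Pi.add_apply, Pi.smul_apply, smul_eq_mul]
      ring
    have heq2 : (∫ o, (o.2.2 - f1 (o.1, o.2.1)) ^ 2 ∂Pstar) = ∫ o, E o ^ 2 ∂Pstar := rfl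
    rw [heq1, expand t, heq2] at hmin
    have h2 : 2 * t * B ≤ t ^ 2 * A := by linarith
    have := (mul_le_mul_iff_right₀ ht0).mp (by nlinarith : t * (2 * B) ≤ t * (t * A))
    exact this
  -- B ≤ 0
  have hBle : B ≤ 0 := by
    by_contra hpos
    push_neg at hpos
    rcases eq_or_lt_of_le hAnn with hA0 | hApos
    · have := hrisk 1 one_pos le_rfl
      rw [← hA0] at this
      linarith
    · set t := min 1 (B / A) with htdef
      have ht0 : 0 < t := lt_min one_pos (div_pos hpos hApos)
      have ht1 : t ≤ 1 := min_le_left _ _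
      have htA : t * A ≤ B := by
        have : t ≤ B / A := min_le_right _ _
        calc t * A ≤ (B / A) * A := by nlinarith
          _ = B := div_mul_cancel₀ B (ne_of_gt hApos)
      have := hrisk t ht0 ht1
      linarith
  -- conclude
  have heqf : (fun o : 𝒳 × 𝒜 × ℝ => (o.2.2 - f (o.1, o.2.1)) ^ 2)
      = fun o => (E o - 1 * G o) ^ 2 := by
    funext o; simp only [hE, hG]; ring
  have hgoalE : (∫ o, (o.2.2 - f1 (o.1, o.2.1)) ^ 2 ∂Pstar) = ∫ o, E o ^ 2 ∂Pstar := rfl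
  rw [heqf, expand 1, hgoalE]
  linarith
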